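/- Let k be bounded, symmetric, and satisfy k(v,v') ≥ c > 0 for all v, v'. Then the null space of the collision operator L consists exactly of the constant functions: L f = 0 (a.e.) if and only if f equals its velocity average ⟨f⟩ almost everywhere on S^{d-1}. -/

import Mathlib

open MeasureTheory

/-- The surface measure on the unit sphere `S^{d-1} ⊂ ℝ^d`. -/
noncomputable def sphμ (d : ℕ) : Measure (Metric.sphere (0 : EuclideanSpace ℝ (Fin d)) 1) :=
  (volume : Measure (EuclideanSpace ℝ (Fin d))).toSphere

/-- The velocity average `⟨h⟩ = (1/|S^{d-1}|) ∫_{S^{d-1}} h`. -/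
noncomputable def sAvg {d : ℕ} (h : Metric.sphere (0 : EuclideanSpace ℝ (Fin d)) 1 → ℝ) : ℝ :=
  ((sphμ d) Set.univ).toReal⁻¹ * ∫ v, h v ∂(sphμ d)

instance sphμ_finite (d : ℕ) : IsFiniteMeasure (sphμ d) := by
  unfold sphμ; infer_instance

lemma sphμ_pos (d : ℕ) (hd : 0 < d) : 0 < ((sphμ d) Set.univ).toReal := by
  have h1 : (sphμ d) Set.univ = (Module.finrank ℝ (EuclideanSpace ℝ (Fin d))) *
      volume (Metric.ball (0 : EuclideanSpace ℝ (Fin d)) 1) :=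
    Measure.toSphere_apply_univ _
  rw [ENNReal.toReal_pos_iff, h1]
  refine ⟨ENNReal.mul_pos ?_ (Metric.measure_ball_pos _ _ one_pos).ne', ?_⟩
  · simp [finrank_euclideanSpace_fin, hd.ne']
  · rw [← h1]; exact measure_lt_top _ _

lemma bnd1 {C x y kk : ℝ} (hk : |kk| ≤ C) :
    |kk * x * (y - x)| ≤ C * (2 * (x ^ 2 + y ^ 2)) := by
  have h0 : 0 ≤ C := le_trans (abs_nonneg _) hk
  have h1 : |x * (y - x)| ≤ 2 * (x ^ 2 + y ^ 2) := by
    rw [abs_le]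
    constructor <;> nlinarith [sq_nonneg (x + y), sq_nonneg (x - y), sq_nonneg x, sq_nonneg y,
      sq_nonneg (2 * x - y), sq_nonneg (2 * x + y)]
  calc |kk * x * (y - x)| = |kk| * |x * (y - x)| := by rw [mul_assoc, abs_mul]
    _ ≤ C * (2 * (x ^ 2 + y ^ 2)) := mul_le_mul hk h1 (abs_nonneg _) h0

lemma bnd2 {C x y kk : ℝ} (hk : |kk| ≤ C) :
    |kk * (y - x) ^ 2| ≤ C * (2 * (x ^ 2 + y ^ 2)) := by
  have h0 : 0 ≤ C := le_trans (abs_nonneg _) hk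
  have h1 : |(y - x) ^ 2| ≤ 2 * (x ^ 2 + y ^ 2) := by
    rw [abs_of_nonneg (sq_nonneg _)]; nlinarith [sq_nonneg (x + y)]
  calc |kk * (y - x) ^ 2| = |kk| * |(y - x) ^ 2| := abs_mul _ _
    _ ≤ C * (2 * (x ^ 2 + y ^ 2)) := mul_le_mul hk h1 (abs_nonneg _) h0

lemma stmt6_aux (d : ℕ) (hd : 0 < d)
    (k : Metric.sphere (0 : EuclideanSpace ℝ (Fin d)) 1 →
         Metric.sphere (0 : EuclideanSpace ℝ (Fin d)) 1 → ℝ)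
    (hk_meas : Measurable (Function.uncurry k))
    (C : ℝ) (hC : ∀ v v', k v v' ≤ C)
    (hk_symm : ∀ v v', k v v' = k v' v)
    (c : ℝ) (hc : 0 < c) (hk_pos : ∀ v v', c ≤ k v v')
    (f : Metric.sphere (0 : EuclideanSpace ℝ (Fin d)) 1 → ℝ)
    (hmf : StronglyMeasurable f)
    (hf : MemLp f 2 (sphμ d)) :
    (∀ᵐ v ∂(sphμ d), sAvg (fun v' => k v v' * (f v' - f v)) = 0)
      ↔ (∀ᵐ v ∂(sphμ d), f v = sAvg f) := by
  have hM : 0 < ((sphμ d) Set.univ).toReal := sphμ_pos d hd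
  have hkabs : ∀ v v', |k v v'| ≤ C := fun v v' =>
    abs_le.2 ⟨by nlinarith [hk_pos v v', hC v v'], hC v v'⟩
  have hfint : Integrable f (sphμ d) := hf.integrable (by norm_num)
  have hf2 : Integrable (fun v => f v ^ 2) (sphμ d) := hf.integrable_sq
  constructor
  · intro h
    have h0 : ∀ᵐ v ∂(sphμ d), ∫ v', k v v' * (f v' - f v) ∂(sphμ d) = 0 := by
      filter_upwards [h] with v hv
      unfold sAvg at hv
      rcases mul_eq_zero.1 hv with h' | h'
      · exact absurd h' (by positivity)
      · exact h'
    have hkm : Measurable (fun p : _ × _ => k p.1 p.2) := hk_meas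
    have hf1m : StronglyMeasurable (fun p : (Metric.sphere (0 : EuclideanSpace ℝ (Fin d)) 1) ×
        (Metric.sphere (0 : EuclideanSpace ℝ (Fin d)) 1) => f p.1) :=
      hmf.comp_measurable measurable_fst
    have hf2m : StronglyMeasurable (fun p : (Metric.sphere (0 : EuclideanSpace ℝ (Fin d)) 1) ×
        (Metric.sphere (0 : EuclideanSpace ℝ (Fin d)) 1) => f p.2) :=
      hmf.comp_measurable measurable_snd
    have hD : Integrable (fun p : (Metric.sphere (0 : EuclideanSpace ℝ (Fin d)) 1) ×
        (Metric.sphere (0 : EuclideanSpace ℝ (Fin d)) 1) =>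
        C * (2 * (f p.1 ^ 2 + f p.2 ^ 2))) ((sphμ d).prod (sphμ d)) := by
      refine (Integrable.const_mul (Integrable.const_mul ?_ 2) C)
      refine Integrable.add ?_ ?_
      · simpa using hf2.mul_prod (integrable_const (1 : ℝ)) (ν := sphμ d)
      · simpa using (integrable_const (1 : ℝ)).mul_prod hf2 (μ := sphμ d)
    have hDnorm : ∀ p : (Metric.sphere (0 : EuclideanSpace ℝ (Fin d)) 1) ×
        (Metric.sphere (0 : EuclideanSpace ℝ (Fin d)) 1),
        C * (2 * (f p.1 ^ 2 + f p.2 ^ 2)) ≤ ‖C * (2 * (f p.1 ^ 2 + f p.2 ^ 2))‖ :=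
      fun p => le_abs_self _
    have hT1 : Integrable (fun p : (Metric.sphere (0 : EuclideanSpace ℝ (Fin d)) 1) ×
        (Metric.sphere (0 : EuclideanSpace ℝ (Fin d)) 1) =>
        k p.1 p.2 * f p.1 * (f p.2 - f p.1)) ((sphμ d).prod (sphμ d)) := by
      refine hD.mono ((hkm.stronglyMeasurable.mul hf1m).mul (hf2m.sub hf1m)).aestronglyMeasurable
        (Filter.Eventually.of_forall fun p => ?_)
      exact le_trans (bnd1 (hkabs p.1 p.2)) (hDnorm p)
    have hT2 : Integrable (fun p : (Metric.sphere (0 : EuclideanSpace ℝ (Fin d)) 1) ×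
        (Metric.sphere (0 : EuclideanSpace ℝ (Fin d)) 1) =>
        k p.1 p.2 * f p.2 * (f p.2 - f p.1)) ((sphμ d).prod (sphμ d)) := by
      refine hD.mono ((hkm.stronglyMeasurable.mul hf2m).mul (hf2m.sub hf1m)).aestronglyMeasurable
        (Filter.Eventually.of_forall fun p => ?_)
      have : |k p.1 p.2 * f p.2 * (f p.2 - f p.1)| = |k p.1 p.2 * f p.2 * (f p.1 - f p.2)| := by
        rw [abs_mul, abs_mul (k p.1 p.2 * f p.2), abs_sub_comm]
      rw [Real.norm_eq_abs, this]
      have hb := bnd1 (x := f p.2) (y := f p.1) (hkabs p.1 p.2)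
      refine le_trans hb ?_
      have e : C * (2 * (f p.2 ^ 2 + f p.1 ^ 2)) = C * (2 * (f p.1 ^ 2 + f p.2 ^ 2)) := by ring
      rw [e]; exact hDnorm p
    have hK : Integrable (fun p : (Metric.sphere (0 : EuclideanSpace ℝ (Fin d)) 1) ×
        (Metric.sphere (0 : EuclideanSpace ℝ (Fin d)) 1) =>
        k p.1 p.2 * (f p.2 - f p.1) ^ 2) ((sphμ d).prod (sphμ d)) := by
      have hmeasK : Measurable fun p : (Metric.sphere (0 : EuclideanSpace ℝ (Fin d)) 1) ×
          (Metric.sphere (0 : EuclideanSpace ℝ (Fin d)) 1) =>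
          k p.1 p.2 * (f p.2 - f p.1) ^ 2 :=
        hkm.mul (((hmf.measurable.comp measurable_snd).sub
          (hmf.measurable.comp measurable_fst)).pow_const 2)
      refine hD.mono hmeasK.aestronglyMeasurable (Filter.Eventually.of_forall fun p => ?_)
      exact le_trans (bnd2 (hkabs p.1 p.2)) (hDnorm p)
    have eT1 : ∫ p, k p.1 p.2 * f p.1 * (f p.2 - f p.1) ∂((sphμ d).prod (sphμ d)) = 0 := by
      rw [integral_prod _ hT1]
      have : ∀ᵐ v ∂(sphμ d), ∫ v', k v v' * f v * (f v' - f v) ∂(sphμ d) = 0 := by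
        filter_upwards [h0] with v hv
        have e : (fun v' => k v v' * f v * (f v' - f v))
            = fun v' => f v * (k v v' * (f v' - f v)) := by funext v'; ring
        rw [e, integral_const_mul, hv, mul_zero]
      rw [integral_congr_ae this, integral_zero]
    have eT2 : ∫ p, k p.1 p.2 * f p.2 * (f p.2 - f p.1) ∂((sphμ d).prod (sphμ d)) = 0 := by
      rw [integral_prod_symm _ hT2]
      have : ∀ᵐ y ∂(sphμ d), ∫ x, k x y * f y * (f y - f x) ∂(sphμ d) = 0 := by
        filter_upwards [h0] with y hy
        have e : (fun x => k x y * f y * (f y - f x))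
            = fun x => -(f y * (k y x * (f x - f y))) := by
          funext x; rw [hk_symm x y]; ring
        rw [e, integral_neg, integral_const_mul, hy, mul_zero, neg_zero]
      rw [integral_congr_ae this, integral_zero]
    have eK : ∫ p, k p.1 p.2 * (f p.2 - f p.1) ^ 2 ∂((sphμ d).prod (sphμ d)) = 0 := by
      have e : (fun p : (Metric.sphere (0 : EuclideanSpace ℝ (Fin d)) 1) ×
          (Metric.sphere (0 : EuclideanSpace ℝ (Fin d)) 1) =>
          k p.1 p.2 * (f p.2 - f p.1) ^ 2)
          = fun p => k p.1 p.2 * f p.2 * (f p.2 - f p.1)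
            - k p.1 p.2 * f p.1 * (f p.2 - f p.1) := by funext p; ring
      rw [e, integral_sub hT2 hT1, eT1, eT2, sub_zero]
    have hae : ∀ᵐ p ∂((sphμ d).prod (sphμ d)), f p.2 = f p.1 := by
      have hnn : (0 : (Metric.sphere (0 : EuclideanSpace ℝ (Fin d)) 1) ×
          (Metric.sphere (0 : EuclideanSpace ℝ (Fin d)) 1) → ℝ)
          ≤ fun p => k p.1 p.2 * (f p.2 - f p.1) ^ 2 :=
        fun p => mul_nonneg (le_trans hc.le (hk_pos _ _)) (sq_nonneg _)
      have := (integral_eq_zero_iff_of_nonneg hnn hK).1 eK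
      filter_upwards [this] with p hp
      have hkp : 0 < k p.1 p.2 := lt_of_lt_of_le hc (hk_pos _ _)
      have : (f p.2 - f p.1) ^ 2 = 0 := by
        by_contra hne
        exact hne (by
          have := hp
          simp only [Pi.zero_apply] at this
          exact (mul_eq_zero.1 this).resolve_left hkp.ne')
      have := pow_eq_zero_iff (n := 2) (by norm_num) |>.1 this
      linarith [sub_eq_zero.1 this]
    have h2 := MeasureTheory.Measure.ae_ae_of_ae_prod hae
    filter_upwards [h2] with v hv
    have hI : ∫ v', f v' ∂(sphμ d) = ∫ (_ : Metric.sphere (0 : EuclideanSpace ℝ (Fin d)) 1),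
        f v ∂(sphμ d) :=
      integral_congr_ae (by filter_upwards [hv] with v' h'; rw [h'])
    have : sAvg f = f v := by
      unfold sAvg
      rw [hI, integral_const, smul_eq_mul, Measure.real, ← mul_assoc, inv_mul_cancel₀ hM.ne', one_mul]
    exact this.symm
  · intro h
    filter_upwards [h] with v hv
    unfold sAvg
    rw [integral_congr_ae (g := fun _ => (0 : ℝ)) ?_, integral_zero, mul_zero]
    filter_upwards [h] with v' hv'
    rw [hv, hv', sub_self, mul_zero]

/-- If `k` is bounded, symmetric and uniformly positive (`k ≥ c > 0`), the null space of the
collision operator `L` consists exactly of the constant functions: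
`L f = 0` a.e. iff `f = ⟨f⟩` a.e. on `S^{d-1}`. -/
theorem stmt6 (d : ℕ) (hd : 0 < d)
    (k : Metric.sphere (0 : EuclideanSpace ℝ (Fin d)) 1 →
         Metric.sphere (0 : EuclideanSpace ℝ (Fin d)) 1 → ℝ)
    (hk_meas : Measurable (Function.uncurry k))
    (hk_bdd : ∃ C : ℝ, ∀ v v', k v v' ≤ C)
    (hk_symm : ∀ v v', k v v' = k v' v)
    (c : ℝ) (hc : 0 < c) (hk_pos : ∀ v v', c ≤ k v v')
    (f : Metric.sphere (0 : EuclideanSpace ℝ (Fin d)) 1 → ℝ)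
    (hf : MemLp f 2 (sphμ d)) :
    (∀ᵐ v ∂(sphμ d), sAvg (fun v' => k v v' * (f v' - f v)) = 0)
      ↔ (∀ᵐ v ∂(sphμ d), f v = sAvg f) := by
  obtain ⟨C, hC⟩ := hk_bdd
  set g := hf.1.mk f with hgdef
  have hg : StronglyMeasurable g := hf.1.stronglyMeasurable_mk
  have hfg : f =ᵐ[sphμ d] g := hf.1.ae_eq_mk
  have hgL : MemLp g 2 (sphμ d) := hf.ae_eq hfg
  have key := stmt6_aux d hd k hk_meas C hC hk_symm c hc hk_pos g hg hgL
  have e2 : sAvg f = sAvg g := by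
    unfold sAvg; congr 1; exact integral_congr_ae hfg
  have e1 : ∀ᵐ v ∂(sphμ d), sAvg (fun v' => k v v' * (f v' - f v))
      = sAvg (fun v' => k v v' * (g v' - g v)) := by
    filter_upwards [hfg] with v hv
    unfold sAvg; congr 1
    refine integral_congr_ae ?_
    filter_upwards [hfg] with v' hv'
    rw [hv, hv']
  exact ((Filter.eventually_congr (e1.mono fun v hv => by rw [hv])).trans key).trans
    (Filter.eventually_congr (hfg.mono fun v hv => by rw [hv, e2])).symm
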